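/- Let A be a Hermitian n×n matrix with spectral decomposition given by distinct real eigenvalues θ_1,…,θ_m (m ≥ 2) and idempotents E_1,…,E_m, and write θ_max and θ_min for the largest and smallest eigenvalues. Let P and Q be density matrices with tr(P·Q) = 0, and suppose there is perfect state transfer from P to Q at time t > 0, i.e. U(t)·P·U(−t) = Q. Then t·(θ_max − θ_min) ≥ π. -/

import Mathlib

open Matrix
open scoped ComplexOrder

/-- The transition matrix `U(t) = exp(itA)`. -/
noncomputable def U {n : ℕ} (A : Matrix (Fin n) (Fin n) ℂ) (t : ℝ) :
    Matrix (Fin n) (Fin n) ℂ :=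
  NormedSpace.exp (((t : ℂ) * Complex.I) • A)

/-- If `M * E = lam • E` then `exp(M) * E = exp(lam) • E`. -/
lemma exp_mul_of_eigen {n : ℕ} (M E : Matrix (Fin n) (Fin n) ℂ) (lam : ℂ)
    (h : M * E = lam • E) :
    NormedSpace.exp M * E = Complex.exp lam • E := by
  letI : SeminormedRing (Matrix (Fin n) (Fin n) ℂ) := Matrix.linftyOpSemiNormedRing
  letI : NormedRing (Matrix (Fin n) (Fin n) ℂ) := Matrix.linftyOpNormedRing
  letI : NormedAlgebra ℂ (Matrix (Fin n) (Fin n) ℂ) := Matrix.linftyOpNormedAlgebra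
  have hpow : ∀ k : ℕ, M ^ k * E = lam ^ k • E := by
    intro k
    induction k with
    | zero => simp
    | succ k ih =>
      rw [pow_succ, pow_succ, Matrix.mul_assoc, h, Matrix.mul_smul, ih, smul_smul,
        mul_comm]
  have hsummable : Summable fun k : ℕ => ((k.factorial : ℂ)⁻¹) • M ^ k :=
    NormedSpace.expSeries_summable' (𝕂 := ℂ) M
  rw [NormedSpace.exp_eq_tsum ℂ, ← hsummable.tsum_mul_right E]
  have hterm : ∀ k : ℕ, (((k.factorial : ℂ)⁻¹) • M ^ k) * E
      = (((k.factorial : ℂ)⁻¹) * lam ^ k) • E := by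
    intro k
    rw [Matrix.smul_mul, hpow, smul_smul]
  rw [tsum_congr hterm]
  have hsummable2 : Summable fun k : ℕ => ((k.factorial : ℂ)⁻¹) * lam ^ k := by
    simpa [smul_eq_mul] using NormedSpace.expSeries_summable' (𝕂 := ℂ) lam
  rw [hsummable2.tsum_smul_const E]
  congr 1
  rw [Complex.exp_eq_exp_ℂ, NormedSpace.exp_eq_tsum ℂ]
  simp [smul_eq_mul]

/-- A positive semidefinite matrix has nonnegative (in `ComplexOrder`) trace. -/
lemma psd_trace_nonneg {n : ℕ} {M : Matrix (Fin n) (Fin n) ℂ} (hM : M.PosSemidef) :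
    0 ≤ M.trace := by
  exact hM.trace_nonneg

theorem stmt_12 {n m : ℕ} (hn : 1 ≤ n) (hm : 2 ≤ m)
    (A : Matrix (Fin n) (Fin n) ℂ) (hA : A.IsHermitian)
    (θ : Fin m → ℝ) (hθ : Function.Injective θ)
    (E : Fin m → Matrix (Fin n) (Fin n) ℂ)
    (hE0 : ∀ r, E r ≠ 0)
    (hEherm : ∀ r, (E r).IsHermitian)
    (hEmul : ∀ r s : Fin m, E r * E s = if r = s then E r else 0)
    (hEsum : ∑ r, E r = 1)
    (hspec : A = ∑ r, (θ r : ℂ) • E r)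
    (rmax rmin : Fin m)
    (hmax : ∀ r, θ r ≤ θ rmax) (hmin : ∀ r, θ rmin ≤ θ r)
    (P Q : Matrix (Fin n) (Fin n) ℂ)
    (hP : P.PosSemidef) (hPtr : P.trace = 1)
    (hQ : Q.PosSemidef) (hQtr : Q.trace = 1)
    (horth : (P * Q).trace = 0)
    (t : ℝ) (ht : 0 < t) (hpst : U A t * P * U A (-t) = Q) :
    Real.pi ≤ t * (θ rmax - θ rmin) := by
  classical
  -- eigen relation A * E r = θ r • E r
  have hAE : ∀ r, A * E r = (θ r : ℂ) • E r := by
    intro r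
    rw [hspec, Finset.sum_mul]
    rw [Finset.sum_eq_single r]
    · rw [Matrix.smul_mul, hEmul]; simp
    · intro s _ hs
      rw [Matrix.smul_mul, hEmul]
      simp [hs]
    · simp
  -- U A s * E r
  have hUE : ∀ (s : ℝ) (r : Fin m),
      U A s * E r = Complex.exp ((s : ℂ) * Complex.I * θ r) • E r := by
    intro s r
    apply exp_mul_of_eigen
    rw [Matrix.smul_mul, hAE, smul_smul]
  have hUs : ∀ s : ℝ, U A s = ∑ r, Complex.exp ((s : ℂ) * Complex.I * θ r) • E r := by
    intro s
    calc U A s = U A s * ∑ r, E r := by rw [hEsum, mul_one]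
    _ = ∑ r, U A s * E r := by rw [Finset.mul_sum]
    _ = _ := Finset.sum_congr rfl fun r _ => hUE s r
  -- square root of P
  open scoped MatrixOrder Matrix.Norms.L2Operator in
  set S : Matrix (Fin n) (Fin n) ℂ := CFC.sqrt P with hSdef
  have hSS : S * S = P := by
    open scoped MatrixOrder Matrix.Norms.L2Operator in
    exact CFC.sqrt_mul_sqrt_self P hP.nonneg
  have hSH : Sᴴ = S := by
    open scoped MatrixOrder Matrix.Norms.L2Operator in
    exact (CFC.sqrt_nonneg P).posSemidef.1
  set N : Matrix (Fin n) (Fin n) ℂ := S * U A t * S with hNdef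
  -- conjugate transpose of U
  have hUH : (U A t)ᴴ = U A (-t) := by
    rw [hUs t, hUs (-t), Matrix.conjTranspose_sum]
    apply Finset.sum_congr rfl
    intro r _
    rw [Matrix.conjTranspose_smul, (hEherm r).eq]
    congr 1
    rw [Complex.star_def, ← Complex.exp_conj]
    congr 1
    simp only [_root_.map_mul, Complex.conj_ofReal, Complex.conj_I]
    push_cast
    ring
  have hNH : Nᴴ = S * U A (-t) * S := by
    rw [hNdef]
    rw [Matrix.conjTranspose_mul, Matrix.conjTranspose_mul, hSH, hUH, Matrix.mul_assoc]
  -- trace of N * Nᴴ is zero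
  have htrace0 : (N * Nᴴ).trace = 0 := by
    have h1 : N * Nᴴ = S * (U A t * P * U A (-t)) * S := by
      rw [hNH, hNdef, ← hSS]
      simp only [Matrix.mul_assoc]
    rw [h1, hpst, Matrix.trace_mul_comm, ← Matrix.mul_assoc, hSS, horth]
  -- N = 0
  have hN0 : N = 0 := by
    have hsum : ∑ i, ∑ j, (Complex.normSq (N i j) : ℂ) = 0 := by
      rw [← htrace0]
      simp only [Matrix.trace, Matrix.diag, Matrix.mul_apply, Matrix.conjTranspose_apply,
        Complex.star_def, Complex.mul_conj]
    have hsumR : ∑ i, ∑ j, Complex.normSq (N i j) = 0 := by exact_mod_cast hsum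
    rw [Finset.sum_eq_zero_iff_of_nonneg
      (fun i _ => Finset.sum_nonneg fun j _ => Complex.normSq_nonneg (N i j))] at hsumR
    ext i j
    have h2 := (Finset.sum_eq_zero_iff_of_nonneg
      (fun j _ => Complex.normSq_nonneg (N i j))).1 (hsumR i (Finset.mem_univ i)) j
      (Finset.mem_univ j)
    simpa using Complex.normSq_eq_zero.mp h2
  have htrN : N.trace = 0 := by rw [hN0, Matrix.trace_zero]
  -- the nonnegative weights
  set α : Fin m → ℝ := fun r => ((S * E r * S).trace).re with hαdef
  have hPSDr : ∀ r, (S * E r * S).PosSemidef := by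
    intro r
    have hErPS : (E r).PosSemidef := by
      have h1 : E r = (E r)ᴴ * E r := by
        rw [(hEherm r).eq, hEmul r r]; simp
      rw [h1]
      exact Matrix.posSemidef_conjTranspose_mul_self _
    have := hErPS.mul_mul_conjTranspose_same S
    rwa [hSH] at this
  have htrr : ∀ r, (S * E r * S).trace = ((α r : ℝ) : ℂ) ∧ 0 ≤ α r := by
    intro r
    have h0 := psd_trace_nonneg (hPSDr r)
    rw [Complex.le_def] at h0
    constructor
    · apply Complex.ext <;> simp [hαdef, h0.2.symm]
    · simpa [hαdef] using h0.1
  have hαnonneg : ∀ r, 0 ≤ α r := fun r => (htrr r).2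
  have hαsum : ∑ r, α r = 1 := by
    have h1 : ∑ r, (S * E r * S) = P := by
      have he : S * (∑ r, E r) * S = ∑ r, S * E r * S := by
        rw [Finset.mul_sum, Finset.sum_mul]
      rw [← he, hEsum, mul_one, hSS]
    have h2 : ∑ r, (S * E r * S).trace = 1 := by
      rw [← Matrix.trace_sum, h1, hPtr]
    have h3 : ∑ r, ((α r : ℝ) : ℂ) = 1 := by
      rw [← h2]
      exact Finset.sum_congr rfl fun r _ => ((htrr r).1).symm
    exact_mod_cast h3
  -- key equation
  have hkey : ∑ r, Complex.exp ((t : ℂ) * Complex.I * θ r) * ((α r : ℝ) : ℂ) = 0 := by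
    have h1 : N = ∑ r, Complex.exp ((t : ℂ) * Complex.I * θ r) • (S * E r * S) := by
      rw [hNdef, hUs t, Finset.mul_sum, Finset.sum_mul]
      apply Finset.sum_congr rfl
      intro r _
      rw [Matrix.mul_smul, Matrix.smul_mul]
    rw [← htrN, h1, Matrix.trace_sum]
    apply Finset.sum_congr rfl
    intro r _
    rw [Matrix.trace_smul, (htrr r).1, smul_eq_mul]
  -- conclude
  by_contra hlt
  push_neg at hlt
  set φ : ℝ := t * (θ rmax + θ rmin) / 2 with hφdef
  have hcos : ∀ r, 0 < Real.cos (t * θ r - φ) := by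
    intro r
    apply Real.cos_pos_of_mem_Ioo
    constructor
    · have := mul_le_mul_of_nonneg_left (hmin r) ht.le
      simp only [hφdef]
      nlinarith [Real.pi_pos]
    · have := mul_le_mul_of_nonneg_left (hmax r) ht.le
      simp only [hφdef]
      nlinarith [Real.pi_pos]
  have hkey2 : ∑ r, Real.cos (t * θ r - φ) * α r = 0 := by
    have h2 : ∑ r, Complex.exp (((t * θ r - φ : ℝ) : ℂ) * Complex.I) * ((α r : ℝ) : ℂ)
        = 0 := by
      have h := congrArg (fun z => Complex.exp (-(φ : ℂ) * Complex.I) * z) hkey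
      simp only [mul_zero, Finset.mul_sum] at h
      rw [← h]
      apply Finset.sum_congr rfl
      intro r _
      rw [← mul_assoc, ← Complex.exp_add]
      congr 2
      push_cast
      ring
    have h3 := congrArg Complex.re h2
    rw [Complex.re_sum] at h3
    simpa [Complex.mul_re, ← Complex.ofReal_mul, ← Complex.ofReal_sub,
      Complex.exp_ofReal_mul_I_re] using h3
  obtain ⟨r0, hr0⟩ : ∃ r, 0 < α r := by
    by_contra hc
    push_neg at hc
    have : ∑ r, α r ≤ 0 := Finset.sum_nonpos fun r _ => hc r
    linarith
  have hterm : Real.cos (t * θ r0 - φ) * α r0 ≤ ∑ r, Real.cos (t * θ r - φ) * α r :=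
    Finset.single_le_sum (fun r _ => mul_nonneg (hcos r).le (hαnonneg r))
      (Finset.mem_univ r0)
  nlinarith [hcos r0]
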